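/- Let P ∈ F[x_1,...,x_n] be a polynomial, Q = (Q_1,...,Q_n) a tuple of polynomials in F[y_1,...,y_m], and a ∈ F^m. Then mult(P∘Q, a) ≥ mult(P, Q(a)). -/

import Mathlib

open MvPolynomial

/-- The `i`-th Hasse derivative of a multivariate polynomial `P = Σ_m a_m x^m`. -/
noncomputable def hasseDeriv {F : Type*} [Field F] {σ : Type*} [Fintype σ] [DecidableEq σ]
    (i : σ →₀ ℕ) (P : MvPolynomial σ F) : MvPolynomial σ F :=
  ∑ m ∈ P.support, (∏ k, Nat.choose (m k) (i k)) •
    MvPolynomial.monomial (m - i) (P.coeff m)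

/-- `P` vanishes at `a` with multiplicity at least `N`: all Hasse derivatives of `P` of
weight strictly less than `N` vanish at `a`. -/
def HasMultAtLeast {F : Type*} [Field F] {σ : Type*} [Fintype σ] [DecidableEq σ]
    (P : MvPolynomial σ F) (a : σ → F) (N : ℕ) : Prop :=
  ∀ i : σ →₀ ℕ, (∑ k, i k) < N → MvPolynomial.eval a (hasseDeriv i P) = 0

/-- The multiplicity `mult(P,a)`: the largest `N` (possibly `∞`, when `P = 0`) such that
all Hasse derivatives of `P` of weight less than `N` vanish at `a`. -/
noncomputable def mult {F : Type*} [Field F] {σ : Type*} [Fintype σ] [DecidableEq σ]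
    (P : MvPolynomial σ F) (a : σ → F) : ℕ∞ :=
  ⨆ N ∈ {N : ℕ | HasMultAtLeast P a N}, (N : ℕ∞)

section Aux

variable {F : Type*} [Field F] {σ : Type*} [Fintype σ] [DecidableEq σ]

lemma X_add_C_pow (k : σ) (c : F) (t : ℕ) :
    (X k + C c : MvPolynomial σ F) ^ t =
      ∑ j ∈ Finset.range (t + 1),
        monomial (Finsupp.single k j) (c ^ (t - j) * (t.choose j : F)) := by
  rw [add_pow]
  refine Finset.sum_congr rfl fun j _ => ?_
  rw [← C_mul_X_pow_eq_monomial]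
  rw [← C_pow, C_mul, ← C_eq_coe_nat]
  ring

open Classical in
lemma coeff_prod_X_add_C_pow (a : σ → F) (mo : σ → ℕ) (s : Finset σ) (i : σ →₀ ℕ) :
    coeff i (∏ k ∈ s, (X k + C (a k) : MvPolynomial σ F) ^ mo k) =
      if ∀ k ∉ s, i k = 0 then
        ∏ k ∈ s, (a k ^ (mo k - i k) * ((mo k).choose (i k) : F)) else 0 := by
  induction s using Finset.induction generalizing i with
  | empty =>
    simp only [Finset.prod_empty, coeff_one, Finset.notMem_empty, not_false_iff,
      forall_true_left]
    by_cases h : i = 0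
    · subst h; simp
    · rw [if_neg (by simpa [eq_comm] using h), if_neg]
      intro hall
      exact h (Finsupp.ext fun k => hall k)
  | @insert k0 s hk0 ih =>
    rw [Finset.prod_insert hk0, X_add_C_pow, Finset.sum_mul, coeff_sum]
    have hterm : ∀ j, coeff i (monomial (Finsupp.single k0 j)
        (a k0 ^ (mo k0 - j) * ((mo k0).choose j : F)) *
        ∏ k ∈ s, (X k + C (a k) : MvPolynomial σ F) ^ mo k) =
        if Finsupp.single k0 j ≤ i then
          (a k0 ^ (mo k0 - j) * ((mo k0).choose j : F)) *
            coeff (i - Finsupp.single k0 j) (∏ k ∈ s, (X k + C (a k)) ^ mo k) else 0 :=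
      fun j => coeff_monomial_mul' _ _ _ _
    rw [Finset.sum_congr rfl fun j _ => hterm j]
    rw [Finset.sum_eq_single (i k0)]
    · rw [if_pos (Finsupp.single_le_iff.mpr le_rfl), ih]
      have happ : ∀ k, k ≠ k0 → (i - Finsupp.single k0 (i k0)) k = i k := by
        intro k hk
        simp [Finsupp.tsub_apply, Finsupp.single_apply, hk.symm]
      have happ0 : (i - Finsupp.single k0 (i k0)) k0 = 0 := by
        simp [Finsupp.tsub_apply, Finsupp.single_apply]
      have hcond : (∀ k ∉ s, (i - Finsupp.single k0 (i k0)) k = 0) ↔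
          (∀ k ∉ insert k0 s, i k = 0) := by
        constructor
        · intro hc k hk
          rw [Finset.mem_insert, not_or] at hk
          rw [← happ k hk.1]
          exact hc k hk.2
        · intro hc k hk
          by_cases hkk : k = k0
          · subst hkk; exact happ0
          · rw [happ k hkk]
            exact hc k (by simp [hkk, hk])
      by_cases hc : ∀ k ∉ insert k0 s, i k = 0
      · rw [if_pos (hcond.mpr hc), if_pos hc, Finset.prod_insert hk0]
        rw [Finset.prod_congr rfl fun k hk => by
          rw [happ k (fun h => hk0 (h ▸ hk))]]
      · rw [if_neg (fun h => hc (hcond.mp h)), if_neg hc, mul_zero]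
    · intro j hj hjne
      by_cases hle : Finsupp.single k0 j ≤ i
      · rw [if_pos hle, ih, if_neg, mul_zero]
        intro hc
        have := hc k0 hk0
        rw [Finsupp.tsub_apply, Finsupp.single_apply, if_pos rfl] at this
        have hji : j ≤ i k0 := by simpa using Finsupp.single_le_iff.mp hle
        omega
      · rw [if_neg hle]
    · intro hni
      have : mo k0 < i k0 := by simpa using hni
      rw [Nat.choose_eq_zero_of_lt this]
      simp

lemma eval_hasseDeriv (a : σ → F) (i : σ →₀ ℕ) (P : MvPolynomial σ F) :
    eval a (hasseDeriv i P) = coeff i (aeval (fun k => X k + C (a k)) P) := by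
  classical
  conv_rhs => rw [P.as_sum]
  rw [map_sum, coeff_sum, hasseDeriv, map_sum]
  refine Finset.sum_congr rfl fun mo _ => ?_
  rw [aeval_monomial, Finsupp.prod_fintype _ _ (fun _ => pow_zero _), algebraMap_eq,
    coeff_C_mul, coeff_prod_X_add_C_pow a (fun k => mo k) Finset.univ i,
    if_pos (fun k hk => absurd (Finset.mem_univ k) hk)]
  rw [nsmul_eq_mul, map_mul, map_natCast, eval_monomial,
    Finsupp.prod_fintype _ _ (fun _ => pow_zero _)]
  simp only [Finsupp.tsub_apply, Finset.prod_mul_distrib, Nat.cast_prod]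
  ring

lemma hasseDeriv_zero' (P : MvPolynomial σ F) : hasseDeriv 0 P = P := by
  rw [hasseDeriv]
  conv_rhs => rw [P.as_sum]
  refine Finset.sum_congr rfl fun mo _ => ?_
  simp

lemma coeff_mul_eq_zero {f g : MvPolynomial σ F} {d e : ℕ}
    (hf : ∀ u : σ →₀ ℕ, (∑ k, u k) < d → coeff u f = 0)
    (hg : ∀ v : σ →₀ ℕ, (∑ k, v k) < e → coeff v g = 0)
    {j : σ →₀ ℕ} (hj : (∑ k, j k) < d + e) : coeff j (f * g) = 0 := by
  rw [coeff_mul]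
  refine Finset.sum_eq_zero fun p hp => ?_
  rw [Finset.HasAntidiagonal.mem_antidiagonal] at hp
  have hsum : (∑ k, p.1 k) + (∑ k, p.2 k) = ∑ k, j k := by
    rw [← Finset.sum_add_distrib, ← hp]
    exact Finset.sum_congr rfl fun k _ => rfl
  rcases (by omega : (∑ k, p.1 k) < d ∨ (∑ k, p.2 k) < e) with h | h
  · rw [hf _ h, zero_mul]
  · rw [hg _ h, mul_zero]

lemma coeff_eq_zero_of_weight_lt_one {f : MvPolynomial σ F} (hf : coeff 0 f = 0)
    {u : σ →₀ ℕ} (hu : (∑ k, u k) < 1) : coeff u f = 0 := by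
  have : u = 0 := by
    ext k
    have := Finset.sum_eq_zero_iff.mp (Nat.lt_one_iff.mp hu) k (Finset.mem_univ k)
    simpa using this
  rw [this]; exact hf

lemma coeff_pow_eq_zero {f : MvPolynomial σ F} (hf : coeff 0 f = 0) (t : ℕ) :
    ∀ j : σ →₀ ℕ, (∑ k, j k) < t → coeff j (f ^ t) = 0 := by
  induction t with
  | zero => intro j hj; omega
  | succ t ih =>
    intro j hj
    rw [pow_succ]
    exact coeff_mul_eq_zero ih (fun v hv => coeff_eq_zero_of_weight_lt_one hf hv) hj

variable {τ : Type*} [Fintype τ] [DecidableEq τ]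

lemma coeff_prod_pow_eq_zero {ι : Type*} [DecidableEq ι] (s : Finset ι) (R : ι → MvPolynomial σ F)
    (e : ι → ℕ) (hR : ∀ k, coeff 0 (R k) = 0) :
    ∀ j : σ →₀ ℕ, (∑ k, j k) < ∑ k ∈ s, e k → coeff j (∏ k ∈ s, R k ^ e k) = 0 := by
  induction s using Finset.induction with
  | empty => intro j hj; simp at hj
  | @insert k0 s hk0 ih =>
    intro j hj
    rw [Finset.prod_insert hk0]
    rw [Finset.sum_insert hk0] at hj
    exact coeff_mul_eq_zero (coeff_pow_eq_zero (hR k0) (e k0)) ih hj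

lemma coeff_aeval_eq_zero {N : ℕ} (G : MvPolynomial σ F) (R : σ → MvPolynomial τ F)
    (hR : ∀ k, coeff 0 (R k) = 0)
    (hG : ∀ i : σ →₀ ℕ, (∑ k, i k) < N → coeff i G = 0)
    (j : τ →₀ ℕ) (hj : (∑ l, j l) < N) : coeff j (aeval R G) = 0 := by
  conv_lhs => rw [G.as_sum]
  rw [map_sum, coeff_sum]
  refine Finset.sum_eq_zero fun i hi => ?_
  rw [aeval_monomial, Finsupp.prod_fintype _ _ (fun _ => pow_zero _), algebraMap_eq,
    coeff_C_mul]
  have hiN : N ≤ ∑ k, i k :=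
    le_of_not_gt fun h => (mem_support_iff.mp hi) (hG i h)
  refine mul_eq_zero_of_right _ (coeff_prod_pow_eq_zero Finset.univ R (fun k => i k) hR j ?_)
  simpa using lt_of_lt_of_le hj hiN

lemma hasMultAtLeast_comp (P : MvPolynomial σ F) (Q : σ → MvPolynomial τ F) (a : τ → F)
    {N : ℕ} (h : HasMultAtLeast P (fun k => eval a (Q k)) N) :
    HasMultAtLeast (aeval Q P) a N := by
  intro j hj
  rw [eval_hasseDeriv]
  set b : σ → F := fun k => eval a (Q k) with hb
  set sh : τ → MvPolynomial τ F := fun l => X l + C (a l) with hsh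
  set R : σ → MvPolynomial τ F := fun k => aeval sh (Q k) - C (b k) with hRdef
  have hcomp : aeval sh (aeval Q P) = aeval R (aeval (fun k => X k + C (b k)) P) := by
    rw [comp_aeval_apply, comp_aeval_apply]
    have hfun : (fun k => aeval sh (Q k)) = fun k => (aeval R) (X k + C (b k)) := by
      funext k
      simp [hRdef, algebraMap_eq]
    rw [hfun]
  have hR : ∀ k, coeff 0 (R k) = 0 := by
    intro k
    rw [hRdef]
    simp only [coeff_sub, coeff_zero_C]
    rw [← eval_hasseDeriv a 0 (Q k), hasseDeriv_zero']
    simp [hb]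
  have hG : ∀ i : σ →₀ ℕ, (∑ k, i k) < N →
      coeff i (aeval (fun k => X k + C (b k)) P) = 0 := by
    intro i hi
    rw [← eval_hasseDeriv]
    exact h i hi
  rw [hcomp]
  exact coeff_aeval_eq_zero _ _ hR hG j hj

end Aux

/-- Multiplicities under composition: for `P ∈ F[x_1,…,x_n]`, a tuple
`Q = (Q_1,…,Q_n)` of polynomials in `F[y_1,…,y_m]`, and `a ∈ F^m`,
`mult(P∘Q, a) ≥ mult(P, Q(a))`. -/
theorem mult_comp {F : Type*} [Field F] {n m : ℕ}
    (P : MvPolynomial (Fin n) F) (Q : Fin n → MvPolynomial (Fin m) F) (a : Fin m → F) :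
    mult P (fun k => MvPolynomial.eval a (Q k)) ≤ mult (MvPolynomial.aeval Q P) a := by
  rw [mult, mult]
  exact biSup_mono fun N hN => hasMultAtLeast_comp P Q a hN
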